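/- Let (X_n, h_n) be a sequence of tree-like paths on [0,T] with values in a common compact subset of a Banach space E, each h_n a height function for X_n that is 1-Lipschitz. Then there is a subsequence along which (X_n, h_n) converges uniformly to a pair (Y, h) where h is a 1-Lipschitz height function for Y; in particular the limit Y is a Lipschitz tree-like path. -/

import Mathlib

open Set Filter Topology

lemma infDist_close_of_close {f g : ℝ → ℝ} {s t : ℝ} (hst : s ≤ t)
    (hf : ContinuousOn f (Icc s t)) (hg : ContinuousOn g (Icc s t))
    {ε : ℝ} (hε : ∀ u ∈ Icc s t, dist (f u) (g u) < ε) :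
    dist (sInf (f '' Icc s t)) (sInf (g '' Icc s t)) < ε := by
  have hne : (Icc s t).Nonempty := nonempty_Icc.2 hst
  obtain ⟨a, haI, hfa⟩ := isCompact_Icc.exists_isMinOn hne hf
  obtain ⟨b, hbI, hgb⟩ := isCompact_Icc.exists_isMinOn hne hg
  have hfinf : sInf (f '' Icc s t) = f a :=
    (IsLeast.csInf_eq ⟨mem_image_of_mem f haI, fun y ⟨u, hu, huy⟩ => huy ▸ hfa hu⟩)
  have hginf : sInf (g '' Icc s t) = g b :=
    (IsLeast.csInf_eq ⟨mem_image_of_mem g hbI, fun y ⟨u, hu, huy⟩ => huy ▸ hgb hu⟩)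
  rw [hfinf, hginf, Real.dist_eq, abs_sub_lt_iff]
  have h1 : f a ≤ f b := hfa hbI
  have h2 : g b ≤ g a := hgb haI
  have h3 := hε b hbI
  have h4 := hε a haI
  rw [Real.dist_eq, abs_sub_lt_iff] at h3 h4
  constructor <;> linarith [h3.1, h3.2, h4.1, h4.2]


/-- Let `(X n, h n)` be a sequence of tree-like paths on `[0,T]` with values
in a common compact subset `K` of a Banach space `E`, each `h n` a `1`-Lipschitz height
function for `X n`. Then there is a subsequence along which `(X n, h n)` converges uniformly
on `[0,T]` to a pair `(Y, g)` where `g` is a `1`-Lipschitz height function for `Y`; in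
particular the limit `Y` is a Lipschitz tree-like path. -/
theorem treeLike_compactness
    {E : Type*} [NormedAddCommGroup E] [NormedSpace ℝ E] [CompleteSpace E]
    (T : ℝ) (hT : 0 ≤ T) (K : Set E) (hK : IsCompact K)
    (X : ℕ → ℝ → E) (h : ℕ → ℝ → ℝ)
    (hmem : ∀ n, ∀ t ∈ Set.Icc 0 T, X n t ∈ K)
    (hlip : ∀ n, LipschitzOnWith 1 (h n) (Set.Icc 0 T))
    (hnn : ∀ n, ∀ t ∈ Set.Icc 0 T, 0 ≤ h n t)
    (h0 : ∀ n, h n 0 = 0) (hTzero : ∀ n, h n T = 0)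
    (htree : ∀ n, ∀ s t, s ∈ Set.Icc 0 T → t ∈ Set.Icc 0 T → s ≤ t →
      ‖X n t - X n s‖ ≤ h n s + h n t - 2 * sInf (h n '' Set.Icc s t)) :
    ∃ φ : ℕ → ℕ, StrictMono φ ∧ ∃ (Y : ℝ → E) (g : ℝ → ℝ),
      TendstoUniformlyOn (fun k => X (φ k)) Y atTop (Set.Icc 0 T) ∧
      TendstoUniformlyOn (fun k => h (φ k)) g atTop (Set.Icc 0 T) ∧
      LipschitzOnWith 1 g (Set.Icc 0 T) ∧
      (∀ t ∈ Set.Icc 0 T, 0 ≤ g t) ∧ g 0 = 0 ∧ g T = 0 ∧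
      ∀ s t, s ∈ Set.Icc 0 T → t ∈ Set.Icc 0 T → s ≤ t →
        ‖Y t - Y s‖ ≤ g s + g t - 2 * sInf (g '' Set.Icc s t) := by
  have hdist : ∀ n, ∀ x ∈ Icc (0:ℝ) T, ∀ y ∈ Icc (0:ℝ) T,
      dist (h n x) (h n y) ≤ dist x y := by
    intro n x hx y hy
    have := (lipschitzOnWith_iff_dist_le_mul.1 (hlip n)) x hx y hy
    simpa using this
  -- h is bounded by T
  have hhb : ∀ n, ∀ t ∈ Icc (0:ℝ) T, h n t ∈ Icc (0:ℝ) T := by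
    intro n t ht
    refine ⟨hnn n t ht, ?_⟩
    have := hdist n t ht T (right_mem_Icc.2 hT)
    rw [hTzero n, Real.dist_eq, Real.dist_eq] at this
    rw [sub_zero] at this
    have h2 : |t - T| = T - t := by rw [abs_sub_comm]; exact abs_of_nonneg (by linarith [ht.2])
    have := (le_abs_self (h n t)).trans this
    rw [h2] at this
    linarith [ht.1]
  -- the infimum bound: X n is 2-Lipschitz on [0,T]
  have hinf_lb : ∀ n, ∀ s t : ℝ, s ∈ Icc (0:ℝ) T → t ∈ Icc (0:ℝ) T → s ≤ t →
      (h n s + h n t - 2 * (t - s)) / 2 ≤ sInf (h n '' Icc s t) := by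
    intro n s t hs ht hst
    apply le_csInf ((nonempty_Icc.2 hst).image _)
    rintro y ⟨u, hu, rfl⟩
    have huI : u ∈ Icc (0:ℝ) T := ⟨hs.1.trans hu.1, hu.2.trans ht.2⟩
    have d1 := hdist n s hs u huI
    have d2 := hdist n t ht u huI
    rw [Real.dist_eq, Real.dist_eq] at d1 d2
    have a1 : h n s - h n u ≤ t - s := by
      have := (le_abs_self (h n s - h n u)).trans d1
      have : h n s - h n u ≤ |s - u| := (le_abs_self _).trans d1
      rw [abs_sub_comm, abs_of_nonneg (by linarith [hu.1])] at this
      linarith [hu.2]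
    have a2 : h n t - h n u ≤ t - s := by
      have : h n t - h n u ≤ |t - u| := (le_abs_self _).trans d2
      rw [abs_of_nonneg (by linarith [hu.2])] at this
      linarith [hu.1]
    linarith
  have hXlip : ∀ n, LipschitzOnWith 2 (X n) (Icc (0:ℝ) T) := by
    intro n
    rw [lipschitzOnWith_iff_dist_le_mul]
    have key : ∀ s t : ℝ, s ∈ Icc (0:ℝ) T → t ∈ Icc (0:ℝ) T → s ≤ t →
        dist (X n t) (X n s) ≤ 2 * dist t s := by
      intro s t hs ht hst
      rw [dist_eq_norm, Real.dist_eq, abs_of_nonneg (by linarith)]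
      have := htree n s t hs ht hst
      have := hinf_lb n s t hs ht hst
      linarith
    intro x hx y hy
    rcases le_total x y with hxy | hxy
    · rw [dist_comm, dist_comm x y]; exact_mod_cast key x y hx hy hxy
    · exact_mod_cast key y x hy hx hxy
  -- package into continuous maps on the compact interval
  set C : Set (E × ℝ) := K ×ˢ Icc (0:ℝ) T with hCdef
  have hC : IsCompact C := hK.prod isCompact_Icc
  have hFlip : ∀ n, LipschitzWith 2 (fun x : Icc (0:ℝ) T => (X n x.1, h n x.1)) := by
    intro n
    have := LipschitzWith.prodMk ((hXlip n).to_restrict)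
      (((hlip n).to_restrict).weaken (by norm_num : (1:NNReal) ≤ 2))
    simpa using this
  set f : ℕ → C(Icc (0:ℝ) T, E × ℝ) :=
    fun n => ⟨fun x => (X n x.1, h n x.1), (hFlip n).continuous⟩ with hfdef
  set S : Set C(Icc (0:ℝ) T, E × ℝ) :=
    {F | LipschitzWith 2 F ∧ ∀ x, F x ∈ C} with hSdef
  have hfS : ∀ n, f n ∈ S := fun n =>
    ⟨hFlip n, fun x => ⟨hmem n x.1 x.2, hhb n x.1 x.2⟩⟩
  set A : Set (Icc (0:ℝ) T → E × ℝ) :=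
    {u | (∀ x y, dist (u x) (u y) ≤ 2 * dist x y) ∧ ∀ x, u x ∈ C} with hAdef
  have himage : (fun (F : C(Icc (0:ℝ) T, E × ℝ)) => (F : Icc (0:ℝ) T → E × ℝ)) '' S = A := by
    ext u
    constructor
    · rintro ⟨F, ⟨hF1, hF2⟩, rfl⟩
      refine ⟨fun x y => ?_, hF2⟩
      have := hF1.dist_le_mul x y
      simpa using this
    · rintro ⟨hu1, hu2⟩
      have hul : LipschitzWith 2 u := LipschitzWith.of_dist_le_mul (by
        intro x y; simpa using hu1 x y)
      exact ⟨⟨u, hul.continuous⟩, ⟨hul, hu2⟩, rfl⟩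
  have hAclosed : IsClosed A := by
    have : A = (⋂ (x) (y), {u : Icc (0:ℝ) T → E × ℝ | dist (u x) (u y) ≤ 2 * dist x y}) ∩
        ⋂ x, {u : Icc (0:ℝ) T → E × ℝ | u x ∈ C} := by
      ext u
      simp only [hAdef, Set.mem_setOf_eq, Set.mem_inter_iff, Set.mem_iInter]
    rw [this]
    refine IsClosed.inter (isClosed_iInter fun x => isClosed_iInter fun y => ?_)
      (isClosed_iInter fun x => ?_)
    · exact isClosed_le (((continuous_apply x).dist (continuous_apply y))) continuous_const
    · exact hC.isClosed.preimage (continuous_apply x)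
  have hAcomp : IsCompact A := by
    refine (isCompact_univ_pi fun _ => hC).of_isClosed_subset hAclosed ?_
    intro u hu
    rw [Set.mem_univ_pi]
    exact fun x => hu.2 x
  have hS2 : Equicontinuous ((↑) : S → Icc (0:ℝ) T → E × ℝ) := by
    intro x₀
    rw [Metric.equicontinuousAt_iff]
    intro ε hε
    refine ⟨ε / 2, by linarith, fun x hx F => ?_⟩
    calc dist (F.1 x₀) (F.1 x) ≤ 2 * dist x₀ x := by
          have := F.2.1.dist_le_mul x₀ x; simpa using this
      _ < ε := by rw [dist_comm]; linarith
  have hScomp : IsCompact S :=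
    ArzelaAscoli.isCompact_of_equicontinuous S (himage ▸ hAcomp) hS2
  obtain ⟨F, hFS, φ, hφ, hconv⟩ := hScomp.tendsto_subseq hfS
  have key : ∀ ε > (0:ℝ), ∃ N, ∀ k ≥ N, ∀ x : Icc (0:ℝ) T,
      dist ((f (φ k)) x) (F x) < ε := by
    intro ε hε
    rcases Metric.tendsto_atTop.1 hconv ε hε with ⟨N, hN⟩
    exact ⟨N, fun k hk x =>
      lt_of_le_of_lt (ContinuousMap.dist_apply_le_dist x) (hN k hk)⟩
  set Y : ℝ → E := fun t => if ht : t ∈ Icc (0:ℝ) T then (F ⟨t, ht⟩).1 else 0 with hYdef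
  set g : ℝ → ℝ := fun t => if ht : t ∈ Icc (0:ℝ) T then (F ⟨t, ht⟩).2 else 0 with hgdef
  have hYx : ∀ t (ht : t ∈ Icc (0:ℝ) T), Y t = (F ⟨t, ht⟩).1 := fun t ht => dif_pos ht
  have hgx : ∀ t (ht : t ∈ Icc (0:ℝ) T), g t = (F ⟨t, ht⟩).2 := fun t ht => dif_pos ht
  have hXu : TendstoUniformlyOn (fun k => X (φ k)) Y atTop (Icc (0:ℝ) T) := by
    rw [Metric.tendstoUniformlyOn_iff]
    intro ε hε
    rcases key ε hε with ⟨N, hN⟩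
    filter_upwards [eventually_ge_atTop N] with k hk t ht
    have hd := hN k hk ⟨t, ht⟩
    rw [hYx t ht]
    calc dist ((F ⟨t, ht⟩).1) (X (φ k) t)
        ≤ dist (F ⟨t, ht⟩) ((f (φ k)) ⟨t, ht⟩) := by
          rw [Prod.dist_eq]; exact le_max_left _ _
      _ < ε := by rw [dist_comm]; exact hd
  have hhu : TendstoUniformlyOn (fun k => h (φ k)) g atTop (Icc (0:ℝ) T) := by
    rw [Metric.tendstoUniformlyOn_iff]
    intro ε hε
    rcases key ε hε with ⟨N, hN⟩
    filter_upwards [eventually_ge_atTop N] with k hk t ht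
    have hd := hN k hk ⟨t, ht⟩
    rw [hgx t ht]
    calc dist ((F ⟨t, ht⟩).2) (h (φ k) t)
        ≤ dist (F ⟨t, ht⟩) ((f (φ k)) ⟨t, ht⟩) := by
          rw [Prod.dist_eq]; exact le_max_right _ _
      _ < ε := by rw [dist_comm]; exact hd
  have hglip : LipschitzOnWith 1 g (Icc (0:ℝ) T) := by
    rw [lipschitzOnWith_iff_dist_le_mul]
    intro x hx y hy
    have hx' := hhu.tendsto_at hx
    have hy' := hhu.tendsto_at hy
    have hdd : Tendsto (fun k => dist (h (φ k) x) (h (φ k) y)) atTop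
        (𝓝 (dist (g x) (g y))) := hx'.dist hy'
    have := le_of_tendsto hdd (Eventually.of_forall fun k => hdist (φ k) x hx y hy)
    simpa using this
  have h0mem : (0:ℝ) ∈ Icc (0:ℝ) T := ⟨le_refl _, hT⟩
  have hTmem : T ∈ Icc (0:ℝ) T := ⟨hT, le_refl _⟩
  refine ⟨φ, hφ, Y, g, hXu, hhu, hglip, ?_, ?_, ?_, ?_⟩
  · intro t ht
    exact ge_of_tendsto' (hhu.tendsto_at ht) fun k => hnn (φ k) t ht
  · have := hhu.tendsto_at h0mem
    simp only [h0] at this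
    exact tendsto_nhds_unique this tendsto_const_nhds
  · have := hhu.tendsto_at hTmem
    simp only [hTzero] at this
    exact tendsto_nhds_unique this tendsto_const_nhds
  · intro s t hs ht hst
    have hsub : Icc s t ⊆ Icc (0:ℝ) T := Icc_subset_Icc hs.1 ht.2
    have hgc : ContinuousOn g (Icc s t) := (hglip.continuousOn).mono hsub
    have hhc : ∀ k, ContinuousOn (h (φ k)) (Icc s t) :=
      fun k => ((hlip (φ k)).continuousOn).mono hsub
    have hinft : Tendsto (fun k => sInf (h (φ k) '' Icc s t)) atTop
        (𝓝 (sInf (g '' Icc s t))) := by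
      rw [Metric.tendsto_atTop]
      intro ε hε
      obtain ⟨N, hN⟩ := Filter.eventually_atTop.1
        (Metric.tendstoUniformlyOn_iff.1 hhu ε hε)
      refine ⟨N, fun k hk => ?_⟩
      exact infDist_close_of_close hst (hhc k) hgc fun u hu => by
        have := hN k hk u (hsub hu); rwa [dist_comm]
    have hXs := hXu.tendsto_at hs
    have hXt := hXu.tendsto_at ht
    have hnorm : Tendsto (fun k => ‖X (φ k) t - X (φ k) s‖) atTop
        (𝓝 ‖Y t - Y s‖) := (hXt.sub hXs).norm
    have hRHS : Tendsto (fun k => h (φ k) s + h (φ k) t - 2 * sInf (h (φ k) '' Icc s t))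
        atTop (𝓝 (g s + g t - 2 * sInf (g '' Icc s t))) :=
      ((hhu.tendsto_at hs).add (hhu.tendsto_at ht)).sub (hinft.const_mul 2)
    exact le_of_tendsto_of_tendsto' hnorm hRHS fun k => htree (φ k) s t hs ht hst
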